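/- Let M_{b|y} (b ∈ {+1,−1}, y ∈ {0,1}) be positive semidefinite operators on ℂ² with M_{+1|y} + M_{−1|y} ⪯ I for each y, and set B_y = M_{+1|y} − M_{−1|y}. Then for every θ− ∈ (0, π/2): (1/2)[Tr(Z·B0) + Tr(Z·B1) − sin(θ−)·Tr(X·B0) + sin(θ−)·Tr(X·B1) + cos(θ−)·Tr(B0 + B1)] ≤ 2·√(1 + sin²(θ−)). -/

import Mathlib

set_option maxHeartbeats 1000000


open Matrix ComplexOrder

lemma keyAMGM (p w q a d r : ℝ) (hp : 0 ≤ p) (hw : 0 ≤ w) (ha : 0 ≤ a) (hd : 0 ≤ d)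
    (hq : q^2 ≤ p*w) (hr : r^2 ≤ a*d) : 0 ≤ p*a + w*d + 2*q*r := by
  have h1 : q^2 * r^2 ≤ (p*w) * (a*d) := mul_le_mul hq hr (sq_nonneg r) (mul_nonneg hp hw)
  nlinarith [sq_nonneg (p*a - w*d), mul_nonneg (mul_nonneg hp ha) (mul_nonneg hw hd),
    mul_nonneg hp ha, mul_nonneg hw hd, h1]

lemma peryBound (s c L att aff dtt dff rt rf ε : ℝ)
    (hε : ε = 1 ∨ ε = -1) (hc : 0 < c) (hc1 : c ≤ 1)
    (hL : L^2 = 1 + s^2) (hL1 : 1 ≤ L)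
    (hat : 0 ≤ att) (haf : 0 ≤ aff) (hdt : 0 ≤ dtt) (hdf : 0 ≤ dff)
    (hrt : rt^2 ≤ att*dtt) (hrf : rf^2 ≤ aff*dff)
    (hrs : (rt+rf)^2 ≤ (1-(att+aff))*(1-(dtt+dff)))
    (ha1 : att+aff ≤ 1) (hd1 : dtt+dff ≤ 1) :
    (att-dtt) - (aff-dff) + ε*(2*s)*(rt-rf) + c*((att+dtt) - (aff+dff)) ≤ 2*L := by
  have hL0 : (0:ℝ) < L := lt_of_lt_of_le one_pos hL1
  have hLc : c ≤ L := hc1.trans hL1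
  have hε2 : ε^2 = 1 := by rcases hε with h | h <;> simp [h]
  have hcc : c^2 ≤ 1 := by nlinarith
  have h1 : 0 ≤ ((L-1)*(L-c))*att + ((L+1)*(L-c))*dtt + 2*(ε*s*(c-L))*rt := by
    apply keyAMGM _ _ _ _ _ _ (mul_nonneg (by linarith) (by linarith))
      (mul_nonneg (by linarith) (by linarith)) hat hdt _ hrt
    apply le_of_eq
    linear_combination (s*(c-L))^2 * hε2 - (L-c)^2 * hL
  have h2 : 0 ≤ ((L+1)*(L+c))*aff + ((L-1)*(L+c))*dff + 2*(ε*s*(c+L))*rf := by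
    apply keyAMGM _ _ _ _ _ _ (mul_nonneg (by linarith) (by linarith))
      (mul_nonneg (by linarith) (by linarith)) haf hdf _ hrf
    apply le_of_eq
    linear_combination (s*(c+L))^2 * hε2 - (L+c)^2 * hL
  have h3 : 0 ≤ (L^2+c)*(1-(att+aff)) + (L^2-c)*(1-(dtt+dff)) + 2*(-(ε*s*c))*(rt+rf) := by
    apply keyAMGM _ _ _ _ _ _ (by nlinarith) (by nlinarith) (by linarith) (by linarith) _ hrs
    have he : (-(ε*s*c))^2 = s^2*c^2 := by linear_combination (s*c)^2 * hε2
    rw [he]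
    nlinarith [hL, hcc, sq_nonneg s, mul_nonneg (sq_nonneg s) (by linarith : (0:ℝ) ≤ 1 - c^2)]
  have hsum : L * ((att-dtt) - (aff-dff) + ε*(2*s)*(rt-rf) + c*((att+dtt) - (aff+dff))) ≤ 2*L^2 := by
    linarith [h1, h2, h3]
  nlinarith [hsum, hL0]

lemma qf2 (A : Matrix (Fin 2) (Fin 2) ℂ) (h : A.PosSemidef) (z w : ℂ) :
    0 ≤ ((starRingEnd ℂ) z * (A 0 0 * z + A 0 1 * w) + (starRingEnd ℂ) w * (A 1 0 * z + A 1 1 * w)) := by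
  have := h.dotProduct_mulVec_nonneg ![z, w]
  simpa [dotProduct, mulVec, Fin.sum_univ_two] using this

lemma entry_facts (A : Matrix (Fin 2) (Fin 2) ℂ) (h : A.PosSemidef) :
    0 ≤ (A 0 0).re ∧ (A 0 0).im = 0 ∧ 0 ≤ (A 1 1).re ∧ (A 1 1).im = 0 ∧
      (A 1 0).re = (A 0 1).re ∧ (A 1 0).im = -(A 0 1).im ∧
      (A 0 1).re^2 + (A 0 1).im^2 ≤ (A 0 0).re * (A 1 1).re := by
  have h00 : (0:ℂ) ≤ A 0 0 := by simpa using qf2 A h 1 0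
  have h11 : (0:ℂ) ≤ A 1 1 := by simpa using qf2 A h 0 1
  have hH : A 1 0 = (starRingEnd ℂ) (A 0 1) := (h.1.apply 1 0).symm
  obtain ⟨ha, ha'⟩ := Complex.le_def.mp h00
  obtain ⟨hd, hd'⟩ := Complex.le_def.mp h11
  have ha0 : (A 0 0).im = 0 := by simpa using ha'.symm
  have hd0i : (A 1 1).im = 0 := by simpa using hd'.symm
  have ha : 0 ≤ (A 0 0).re := by simpa using ha
  have hd : 0 ≤ (A 1 1).re := by simpa using hd
  refine ⟨ha, ha0, hd, hd0i, by simp [hH], by simp [hH], ?_⟩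
  set a := (A 0 0).re; set d := (A 1 1).re
  set m := (A 0 1).re^2 + (A 0 1).im^2 with hm
  have key : ∀ t : ℝ, 0 ≤ a - 2*t*m + t^2*(d*m) := by
    intro t
    rw [hm]
    have hq := qf2 A h 1 (-(t : ℂ) * A 1 0)
    rw [Complex.le_def] at hq
    have h5 := hq.1
    simp only [hH, Complex.mul_re, Complex.mul_im, Complex.add_re, Complex.add_im,
      Complex.one_re, Complex.one_im, Complex.neg_re, Complex.neg_im, Complex.ofReal_re,
      Complex.ofReal_im, Complex.conj_re, Complex.conj_im, Complex.zero_re, _root_.map_mul,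
      map_neg, Complex.conj_ofReal, Complex.conj_conj, ha0, hd0i] at h5
    nlinarith [h5]
  have hm0 : 0 ≤ m := by positivity
  rcases eq_or_lt_of_le hm0 with hm1 | hm1
  · rw [← hm1]; exact mul_nonneg ha hd
  · have hd0 : 0 < d := by
      rcases eq_or_lt_of_le hd with h' | h'
      · exfalso
        have hk := key ((a+1)/(2*m))
        have he : 2*((a+1)/(2*m))*m = a+1 := by field_simp
        rw [← h'] at hk
        simp only [zero_mul, mul_zero] at hk
        linarith
      · exact h'
    have hk := key (1/d)
    have h3 : (1/d)^2 * (d*m) = m/d := by field_simp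
    have h4 : 2*(1/d)*m = 2*(m/d) := by ring
    rw [h3, h4] at hk
    have : m/d ≤ a := by linarith
    calc m = (m/d)*d := by field_simp
    _ ≤ a*d := mul_le_mul_of_nonneg_right this hd0.le

/-- General quantum bound without joint measurability: for (possibly lossy)
binary qubit measurements `M_{±|y}` with `M_{+|y} + M_{−|y} ⪯ I` and
`B_y = M_{+|y} − M_{−|y}`, the same linear functional is at most
`2√(1 + sin²θ−)` for all `θ− ∈ (0, π/2)`. -/
theorem stmt13 (M : Bool → Fin 2 → Matrix (Fin 2) (Fin 2) ℂ)
    (hpos : ∀ b y, (M b y).PosSemidef)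
    (hsub : ∀ y, ((1 : Matrix (Fin 2) (Fin 2) ℂ) - (M true y + M false y)).PosSemidef)
    (θ : ℝ) (hθ : θ ∈ Set.Ioo 0 (Real.pi / 2)) :
    (1 / 2 : ℝ) *
      (((!![1, 0; 0, -1] : Matrix (Fin 2) (Fin 2) ℂ) * (M true 0 - M false 0)).trace +
       ((!![1, 0; 0, -1] : Matrix (Fin 2) (Fin 2) ℂ) * (M true 1 - M false 1)).trace -
       (Real.sin θ : ℂ) *
         ((!![0, 1; 1, 0] : Matrix (Fin 2) (Fin 2) ℂ) * (M true 0 - M false 0)).trace +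
       (Real.sin θ : ℂ) *
         ((!![0, 1; 1, 0] : Matrix (Fin 2) (Fin 2) ℂ) * (M true 1 - M false 1)).trace +
       (Real.cos θ : ℂ) *
         ((M true 0 - M false 0) + (M true 1 - M false 1)).trace).re
      ≤ 2 * Real.sqrt (1 + Real.sin θ ^ 2) := by
  obtain ⟨hθ0, hθ1⟩ := hθ
  have hs : 0 < Real.sin θ := Real.sin_pos_of_pos_of_lt_pi hθ0 (by linarith [Real.pi_pos])
  have hc : 0 < Real.cos θ := Real.cos_pos_of_mem_Ioo ⟨by linarith [Real.pi_pos], hθ1⟩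
  have hc1 : Real.cos θ ≤ 1 := Real.cos_le_one θ
  set s := Real.sin θ
  set c := Real.cos θ
  set L := Real.sqrt (1 + s^2) with hLdef
  have hL : L^2 = 1 + s^2 := Real.sq_sqrt (by positivity)
  have hL1 : 1 ≤ L := by
    nlinarith [Real.sqrt_nonneg (1 + s^2), hL, sq_nonneg s]
  clear_value s c L
  -- entry facts for the four POVM elements
  have Ft0 := entry_facts _ (hpos true 0)
  have Ff0 := entry_facts _ (hpos false 0)
  have Ft1 := entry_facts _ (hpos true 1)
  have Ff1 := entry_facts _ (hpos false 1)
  -- facts for the complements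
  have G0 := entry_facts _ (hsub 0)
  have G1 := entry_facts _ (hsub 1)
  simp only [Matrix.sub_apply, Matrix.add_apply, Matrix.one_apply_eq,
    Matrix.one_apply_ne (show (0 : Fin 2) ≠ 1 by decide),
    Matrix.one_apply_ne (show (1 : Fin 2) ≠ 0 by decide),
    Complex.sub_re, Complex.add_re, Complex.one_re, Complex.sub_im, Complex.add_im,
    Complex.one_im, Complex.zero_re, Complex.zero_im] at G0 G1
  obtain ⟨hat0, -, hdt0, -, hret0, himt0, hdett0⟩ := Ft0
  obtain ⟨haf0, -, hdf0, -, href0, himf0, hdetf0⟩ := Ff0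
  obtain ⟨hat1, -, hdt1, -, hret1, himt1, hdett1⟩ := Ft1
  obtain ⟨haf1, -, hdf1, -, href1, himf1, hdetf1⟩ := Ff1
  obtain ⟨hN0a, -, hN0d, -, -, -, hN0det⟩ := G0
  obtain ⟨hN1a, -, hN1d, -, -, -, hN1det⟩ := G1
  -- per-measurement bounds
  have hdetT0 : ((M true 0 0 1).re)^2 ≤ (M true 0 0 0).re * (M true 0 1 1).re := by
    linarith [hdett0, sq_nonneg (M true 0 0 1).im]
  have hdetF0 : ((M false 0 0 1).re)^2 ≤ (M false 0 0 0).re * (M false 0 1 1).re := by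
    linarith [hdetf0, sq_nonneg (M false 0 0 1).im]
  have hdetT1 : ((M true 1 0 1).re)^2 ≤ (M true 1 0 0).re * (M true 1 1 1).re := by
    linarith [hdett1, sq_nonneg (M true 1 0 1).im]
  have hdetF1 : ((M false 1 0 1).re)^2 ≤ (M false 1 0 0).re * (M false 1 1 1).re := by
    linarith [hdetf1, sq_nonneg (M false 1 0 1).im]
  have hrs0 : ((M true 0 0 1).re + (M false 0 0 1).re)^2 ≤
      (1 - ((M true 0 0 0).re + (M false 0 0 0).re)) *
      (1 - ((M true 0 1 1).re + (M false 0 1 1).re)) := by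
    have e0 : (0 - ((M true 0 0 1).re + (M false 0 0 1).re))^2
        = ((M true 0 0 1).re + (M false 0 0 1).re)^2 := by ring
    linarith [hN0det, sq_nonneg (0 - ((M true 0 0 1).im + (M false 0 0 1).im))]
  have hrs1 : ((M true 1 0 1).re + (M false 1 0 1).re)^2 ≤
      (1 - ((M true 1 0 0).re + (M false 1 0 0).re)) *
      (1 - ((M true 1 1 1).re + (M false 1 1 1).re)) := by
    have e1 : (0 - ((M true 1 0 1).re + (M false 1 0 1).re))^2
        = ((M true 1 0 1).re + (M false 1 0 1).re)^2 := by ring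
    linarith [hN1det, sq_nonneg (0 - ((M true 1 0 1).im + (M false 1 0 1).im))]
  have hB0 := peryBound s c L (M true 0 0 0).re (M false 0 0 0).re (M true 0 1 1).re
    (M false 0 1 1).re (M true 0 0 1).re (M false 0 0 1).re (-1) (Or.inr rfl) hc hc1 hL hL1
    hat0 haf0 hdt0 hdf0 hdetT0 hdetF0 hrs0 (by linarith) (by linarith)
  have hB1 := peryBound s c L (M true 1 0 0).re (M false 1 0 0).re (M true 1 1 1).re
    (M false 1 1 1).re (M true 1 0 1).re (M false 1 0 1).re 1 (Or.inl rfl) hc hc1 hL hL1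
    hat1 haf1 hdt1 hdf1 hdetT1 hdetF1 hrs1 (by linarith) (by linarith)
  -- reduce the goal to real arithmetic
  have tZ : ∀ (P : Matrix (Fin 2) (Fin 2) ℂ),
      ((!![1,0;0,-1] : Matrix (Fin 2) (Fin 2) ℂ) * P).trace = P 0 0 - P 1 1 := by
    intro P
    simp [Matrix.trace_fin_two, Matrix.mul_apply, Fin.sum_univ_two, Matrix.vecMul, dotProduct]
    ring
  have tX : ∀ (P : Matrix (Fin 2) (Fin 2) ℂ),
      ((!![0,1;1,0] : Matrix (Fin 2) (Fin 2) ℂ) * P).trace = P 1 0 + P 0 1 := by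
    intro P
    simp [Matrix.trace_fin_two, Matrix.mul_apply, Fin.sum_univ_two, Matrix.vecMul, dotProduct]
  rw [tZ, tZ, tX, tX]
  simp only [Matrix.trace_fin_two, Matrix.sub_apply, Matrix.add_apply,
    Complex.add_re, Complex.sub_re, Complex.mul_re, Complex.add_im, Complex.sub_im,
    Complex.ofReal_re, Complex.ofReal_im, Complex.mul_im]
  ring_nf
  rw [hret0, href0, hret1, href1]
  linarith [hB0, hB1]
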